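/- Let Φ be an irreducible root system and let S ⊂ Φ be a set of pairwise strongly orthogonal roots (i.e., for any two distinct α, β ∈ S neither α+β nor α−β is a root). Then the intersection of the integer span ℤS with Φ equals S ∪ (−S). -/

import Mathlib

open scoped Classical RealInnerProductSpace

/-- The pairing `⟨γ, α^∨⟩ = 2(γ,α)/(α,α)`. -/
noncomputable def pairing {V : Type*} [NormedAddCommGroup V] [InnerProductSpace ℝ V]
    (γ α : V) : ℝ :=
  2 * ⟪γ, α⟫ / ⟪α, α⟫

/-- A finite (crystallographic, reduced) root system in a Euclidean space. -/
structure IsRootSystem {V : Type*} [NormedAddCommGroup V] [InnerProductSpace ℝ V]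
    (Φ : Set V) : Prop where
  finite : Φ.Finite
  ne_zero : ∀ α ∈ Φ, α ≠ 0
  neg_mem : ∀ α ∈ Φ, -α ∈ Φ
  reflect_mem : ∀ α ∈ Φ, ∀ β ∈ Φ, β - pairing β α • α ∈ Φ
  crystal : ∀ α ∈ Φ, ∀ β ∈ Φ, ∃ n : ℤ, pairing β α = n
  reduced : ∀ α ∈ Φ, ∀ t : ℝ, t • α ∈ Φ → t = 1 ∨ t = -1

/-- Irreducibility of a root system: no nontrivial orthogonal decomposition. -/
def IsIrreducibleRS {V : Type*} [NormedAddCommGroup V] [InnerProductSpace ℝ V]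
    (Φ : Set V) : Prop :=
  ∀ Φ₁ Φ₂ : Set V, Φ = Φ₁ ∪ Φ₂ → (∀ α ∈ Φ₁, ∀ β ∈ Φ₂, ⟪α, β⟫ = 0) → Φ₁ = ∅ ∨ Φ₂ = ∅

/-- A set of roots is strongly orthogonal if for any two distinct elements neither the sum
nor the difference is a root. -/
def StronglyOrthogonal {V : Type*} [NormedAddCommGroup V] [InnerProductSpace ℝ V]
    (Φ : Set V) (S : Set V) : Prop :=
  ∀ α ∈ S, ∀ β ∈ S, α ≠ β → α + β ∉ Φ ∧ α - β ∉ Φ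

/-- A set of pairwise orthogonal vectors. -/
def OrthogonalSet {V : Type*} [NormedAddCommGroup V] [InnerProductSpace ℝ V]
    (S : Set V) : Prop :=
  ∀ α ∈ S, ∀ β ∈ S, α ≠ β → ⟪α, β⟫ = 0

lemma rips {V : Type*} [NormedAddCommGroup V] [InnerProductSpace ℝ V]
    {x : V} (h : x ≠ 0) : 0 < ⟪x, x⟫ :=
  real_inner_self_nonneg.lt_of_ne fun he => h (real_inner_self_nonpos.1 he.symm.le)

lemma key_sub_mem {V : Type*} [NormedAddCommGroup V] [InnerProductSpace ℝ V] {Φ : Set V}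
    (hΦ : IsRootSystem Φ) {α β : V} (hα : α ∈ Φ) (hβ : β ∈ Φ)
    (hne : α ≠ β) (hpos : 0 < ⟪α, β⟫) : α - β ∈ Φ := by
  have hα0 := hΦ.ne_zero α hα
  have hβ0 := hΦ.ne_zero β hβ
  have hαα : (0:ℝ) < ⟪α, α⟫ := rips hα0
  have hββ : (0:ℝ) < ⟪β, β⟫ := rips hβ0
  have hαn : (0:ℝ) < ‖α‖ := norm_pos_iff.2 hα0
  have hβn : (0:ℝ) < ‖β‖ := norm_pos_iff.2 hβ0
  obtain ⟨n, hn⟩ := hΦ.crystal β hβ α hα   -- pairing α β = n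
  obtain ⟨m, hm⟩ := hΦ.crystal α hα β hβ   -- pairing β α = m
  have hCS : ⟪α, β⟫ < ‖α‖ * ‖β‖ := by
    rw [inner_lt_norm_mul_iff_real]
    intro h
    have hmem : (‖α‖ / ‖β‖) • β ∈ Φ := by
      have he : (‖α‖ / ‖β‖) • β = α := by
        rw [div_eq_inv_mul, mul_smul, ← h, smul_smul, inv_mul_cancel₀ hβn.ne', one_smul]
      rwa [he]
    rcases hΦ.reduced β hβ _ hmem with h1 | h1
    · apply hne
      have he : (‖α‖ / ‖β‖) • β = α := by
        rw [div_eq_inv_mul, mul_smul, ← h, smul_smul, inv_mul_cancel₀ hβn.ne', one_smul]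
      rw [← he, h1, one_smul]
    · have : (0:ℝ) < ‖α‖ / ‖β‖ := div_pos hαn hβn
      rw [h1] at this; linarith
  have hkey : ⟪α, β⟫ * ⟪α, β⟫ < ⟪α, α⟫ * ⟪β, β⟫ := by
    rw [real_inner_self_eq_norm_mul_norm, real_inner_self_eq_norm_mul_norm]
    nlinarith [hpos, hαn, hβn]
  have hprodlt : pairing α β * pairing β α < 4 := by
    unfold pairing
    rw [div_mul_div_comm, div_lt_iff₀ (by positivity)]
    nlinarith [hkey, real_inner_comm α β]
  have hn1 : 1 ≤ n := by
    have h1 : (0:ℝ) < pairing α β := div_pos (by linarith) hββ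
    rw [hn] at h1
    have : 0 < n := by exact_mod_cast h1
    omega
  have hm1 : 1 ≤ m := by
    have h1 : (0:ℝ) < pairing β α := by
      unfold pairing
      rw [real_inner_comm α β]
      exact div_pos (by linarith) hαα
    rw [hm] at h1
    have : 0 < m := by exact_mod_cast h1
    omega
  have hnm : n * m < 4 := by
    have : ((n * m : ℤ) : ℝ) < 4 := by push_cast; rw [← hn, ← hm]; exact hprodlt
    exact_mod_cast this
  have hcase : n = 1 ∨ m = 1 := by
    by_contra hc
    push_neg at hc
    have h2 : 2 ≤ n := by omega
    have h3 : 2 ≤ m := by omega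
    nlinarith
  rcases hcase with h1 | h1
  · have := hΦ.reflect_mem β hβ α hα
    rwa [hn, h1, Int.cast_one, one_smul] at this
  · have := hΦ.reflect_mem α hα β hβ
    rw [hm, h1, Int.cast_one, one_smul] at this
    have := hΦ.neg_mem _ this
    rwa [neg_sub] at this

lemma measure_lemma {V : Type*} [NormedAddCommGroup V] (c : V →₀ ℤ) (α : V)
    (hα : α ∈ c.support) (d : ℤ) (hd : (c α - d).natAbs < (c α).natAbs) :
    ((c - Finsupp.single α d).sum fun _ n => n.natAbs) < c.sum fun _ n => n.natAbs := by
  classical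
  set c' := c - Finsupp.single α d with hc'
  have hsupp : c'.support ⊆ c.support := by
    intro i hi
    by_cases hiα : i = α
    · subst hiα; exact hα
    · rw [Finsupp.mem_support_iff] at hi ⊢
      rwa [hc', Finsupp.sub_apply, Finsupp.single_apply, if_neg (Ne.symm hiα), sub_zero] at hi
  rw [Finsupp.sum_of_support_subset c' hsupp _ (fun _ _ => rfl), Finsupp.sum]
  rw [← Finset.add_sum_erase _ _ hα, ← Finset.add_sum_erase _ _ hα]
  have heq : ∀ i ∈ c.support.erase α, (c' i).natAbs = (c i).natAbs := by
    intro i hi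
    have hiα : i ≠ α := Finset.ne_of_mem_erase hi
    rw [hc', Finsupp.sub_apply, Finsupp.single_apply, if_neg (Ne.symm hiα), sub_zero]
  rw [Finset.sum_congr rfl heq]
  have : (c' α).natAbs < (c α).natAbs := by
    rw [hc', Finsupp.sub_apply, Finsupp.single_apply, if_pos rfl]
    exact hd
  omega

lemma main_ind {V : Type*} [NormedAddCommGroup V] [InnerProductSpace ℝ V] {Φ S : Set V}
    (hΦ : IsRootSystem Φ) (hSΦ : S ⊆ Φ) (hso : StronglyOrthogonal Φ S)
    (horth : OrthogonalSet S) :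
    ∀ N : ℕ, ∀ c : V →₀ ℤ, ∀ γ : V, ↑c.support ⊆ S →
      (c.sum fun i r => r • i) = γ → γ ∈ Φ →
      (c.sum fun _ n => n.natAbs) ≤ N → γ ∈ S ∪ -S := by
  intro N
  induction N with
  | zero =>
    intro c γ hcS hsum hγΦ hmeas
    exfalso
    have hc0 : c.support = ∅ := by
      by_contra h
      obtain ⟨i, hi'⟩ := Finset.nonempty_of_ne_empty h
      have h1 : (c i).natAbs ≤ c.sum fun _ n => n.natAbs := by
        rw [Finsupp.sum]
        exact Finset.single_le_sum (f := fun a => (c a).natAbs) (fun _ _ => Nat.zero_le _) hi'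
      have h2 : c i ≠ 0 := Finsupp.mem_support_iff.1 hi'
      omega
    apply hΦ.ne_zero γ hγΦ
    rw [← hsum, Finsupp.sum, hc0, Finset.sum_empty]
  | succ N ih =>
    intro c γ hcS hsum hγΦ hmeas
    have hγ0 : γ ≠ 0 := hΦ.ne_zero γ hγΦ
    have hsuppne : c.support.Nonempty := by
      by_contra h
      rw [Finset.not_nonempty_iff_eq_empty] at h
      apply hγ0
      rw [← hsum, Finsupp.sum, h, Finset.sum_empty]
    obtain ⟨α, hαsupp⟩ := hsuppne
    have hαS : α ∈ S := hcS hαsupp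
    have hαΦ : α ∈ Φ := hSΦ hαS
    have hαα : (0:ℝ) < ⟪α, α⟫ :=
      real_inner_self_nonneg.lt_of_ne fun he =>
        hΦ.ne_zero α hαΦ (real_inner_self_nonpos.1 he.symm.le)
    have hinner : ⟪γ, α⟫ = (c α : ℝ) * ⟪α, α⟫ := by
      rw [← hsum, Finsupp.sum, sum_inner, Finset.sum_eq_single_of_mem α hαsupp]
      · rw [← Int.cast_smul_eq_zsmul ℝ, real_inner_smul_left]
      · intro i hi hiα
        rw [← Int.cast_smul_eq_zsmul ℝ, real_inner_smul_left,
          horth i (hcS hi) α hαS hiα, mul_zero]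
    have hcα : c α ≠ 0 := Finsupp.mem_support_iff.1 hαsupp
    rcases lt_or_gt_of_ne hcα with hneg | hpos
    · -- c α < 0 : use γ + α
      by_cases hγα : γ = -α
      · right
        rw [Set.mem_neg, hγα, neg_neg]; exact hαS
      have hinnerneg : 0 < ⟪γ, -α⟫ := by
        rw [inner_neg_right, hinner]
        have : (c α : ℝ) < 0 := by exact_mod_cast hneg
        nlinarith
      have hδΦ : γ + α ∈ Φ := by
        have := key_sub_mem hΦ hγΦ (hΦ.neg_mem α hαΦ) hγα hinnerneg
        rwa [sub_neg_eq_add] at this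
      set c' := c - Finsupp.single α (-1) with hc'def
      have hc'supp : ↑c'.support ⊆ S := by
        intro i hi
        rcases Finset.mem_union.1 (Finsupp.support_sub hi) with h | h
        · exact hcS h
        · have := Finsupp.support_single_subset h
          rw [Finset.mem_singleton] at this
          rw [this]; exact hαS
      have hc'sum : (c'.sum fun i r => r • i) = γ + α := by
        rw [hc'def, Finsupp.sum_sub_index (fun i _ _ => sub_smul _ _ i),
          Finsupp.sum_single_index (zero_smul ℤ α), hsum]
        simp
      have hc'meas : (c'.sum fun _ n => n.natAbs) ≤ N := by
        have h := measure_lemma c α hαsupp (-1) (by omega)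
        rw [← hc'def] at h
        omega
      have hδ := ih c' (γ + α) hc'supp hc'sum hδΦ hc'meas
      exfalso
      rcases hδ with hδS | hδS
      · by_cases hδα : γ + α = α
        · apply hγ0; rwa [add_eq_right] at hδα
        · have := (hso (γ + α) hδS α hαS hδα).2
          simp at this
          exact this hγΦ
      · rw [Set.mem_neg] at hδS
        by_cases hβα : -(γ + α) = α
        · -- γ = -2α
          have h2 : (-2 : ℝ) • α = γ := by
            have hγ : γ = -α - α := by linear_combination (norm := module) -hβα
            rw [hγ]; module
          rcases hΦ.reduced α hαΦ (-2) (h2 ▸ hγΦ) with h | h <;> norm_num at h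
        · have := (hso (-(γ + α)) hδS α hαS hβα).1
          apply this
          have heq : -(γ + α) + α = -γ := by module
          rw [heq]
          exact hΦ.neg_mem γ hγΦ
    · -- c α > 0 : use γ - α
      by_cases hγα : γ = α
      · left; rw [hγα]; exact hαS
      have hinnerpos : 0 < ⟪γ, α⟫ := by
        rw [hinner]
        have : (0:ℝ) < (c α : ℝ) := by exact_mod_cast hpos
        nlinarith
      have hδΦ : γ - α ∈ Φ := key_sub_mem hΦ hγΦ hαΦ hγα hinnerpos
      set c' := c - Finsupp.single α 1 with hc'def
      have hc'supp : ↑c'.support ⊆ S := by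
        intro i hi
        rcases Finset.mem_union.1 (Finsupp.support_sub hi) with h | h
        · exact hcS h
        · have := Finsupp.support_single_subset h
          rw [Finset.mem_singleton] at this
          rw [this]; exact hαS
      have hc'sum : (c'.sum fun i r => r • i) = γ - α := by
        rw [hc'def, Finsupp.sum_sub_index (fun i _ _ => sub_smul _ _ i),
          Finsupp.sum_single_index (zero_smul ℤ α), hsum]
        simp
      have hc'meas : (c'.sum fun _ n => n.natAbs) ≤ N := by
        have h := measure_lemma c α hαsupp 1 (by omega)
        rw [← hc'def] at h
        omega
      have hδ := ih c' (γ - α) hc'supp hc'sum hδΦ hc'meas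
      exfalso
      rcases hδ with hδS | hδS
      · by_cases hδα : γ - α = α
        · -- γ = 2α
          have h2 : (2 : ℝ) • α = γ := by
            have hγ : γ = α + α := by linear_combination (norm := module) hδα
            rw [hγ]; module
          rcases hΦ.reduced α hαΦ 2 (h2 ▸ hγΦ) with h | h <;> norm_num at h
        · have := (hso α hαS (γ - α) hδS (Ne.symm hδα)).1
          apply this
          have heq : α + (γ - α) = γ := by module
          rw [heq]; exact hγΦ
      · rw [Set.mem_neg] at hδS
        by_cases hβα : -(γ - α) = α
        · apply hγ0
          have h := hβα; rw [neg_sub] at h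
          linear_combination (norm := module) -h
        · have := (hso α hαS (-(γ - α)) hδS (fun h => hβα h.symm)).2
          apply this
          have heq : α - -(γ - α) = γ := by module
          rw [heq]; exact hγΦ

/-- for a strongly orthogonal subset `S` of an irreducible root system `Φ`,
the intersection of the integer span of `S` with `Φ` equals `S ∪ (-S)`. -/
theorem stmt0 {V : Type*} [NormedAddCommGroup V] [InnerProductSpace ℝ V]
    (Φ S : Set V) (hΦ : IsRootSystem Φ) (hirr : IsIrreducibleRS Φ)
    (hSΦ : S ⊆ Φ) (hso : StronglyOrthogonal Φ S) :
    ((Submodule.span ℤ S : Submodule ℤ V) : Set V) ∩ Φ = S ∪ (-S) := by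
  classical
  set S₀ : Set V := {a | a ∈ S ∧ (-a ∈ S → WellOrderingRel a (-a))} with hS₀def
  have hS₀S : S₀ ⊆ S := fun a ha => ha.1
  have hselfne : ∀ a ∈ S, a ≠ -a := by
    intro a ha h
    apply hΦ.ne_zero a (hSΦ ha)
    have h2 : a + a = 0 := by nth_rewrite 2 [h]; simp
    have : (2 : ℝ) • a = 0 := by rw [two_smul]; exact_mod_cast h2
    have := smul_eq_zero.1 this
    norm_num at this
    exact this
  have hcover : S ⊆ S₀ ∪ -S₀ := by
    intro a ha
    by_cases hna : -a ∈ S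
    · rcases trichotomous_of WellOrderingRel a (-a) with h | h | h
      · exact Or.inl ⟨ha, fun _ => h⟩
      · exact absurd h (hselfne a ha)
      · right
        rw [Set.mem_neg]
        refine ⟨hna, fun _ => ?_⟩
        rwa [neg_neg]
    · exact Or.inl ⟨ha, fun h => absurd h hna⟩
  have hnopair : ∀ a ∈ S₀, -a ∉ S₀ := by
    intro a ha hna
    have h1 := ha.2 hna.1
    have h2 := hna.2 (by rw [neg_neg]; exact ha.1)
    rw [neg_neg] at h2
    exact asymm h1 h2
  have hso₀ : StronglyOrthogonal Φ S₀ := fun a ha b hb hab =>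
    hso a (hS₀S ha) b (hS₀S hb) hab
  have horth : OrthogonalSet S₀ := by
    intro a ha b hb hab
    by_contra h
    rcases lt_or_gt_of_ne h with hlt | hgt
    · have hne : a ≠ -b := by
        intro he
        exact hnopair b hb (he ▸ ha)
      have hmem : a - -b ∈ Φ :=
        key_sub_mem hΦ (hSΦ (hS₀S ha)) (hΦ.neg_mem b (hSΦ (hS₀S hb)))
          hne (by rw [inner_neg_right]; linarith)
      rw [sub_neg_eq_add] at hmem
      exact (hso₀ a ha b hb hab).1 hmem
    · exact (hso₀ a ha b hb hab).2
        (key_sub_mem hΦ (hSΦ (hS₀S ha)) (hSΦ (hS₀S hb)) hab hgt)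
  have hspan : (Submodule.span ℤ S : Set V) ⊆ (Submodule.span ℤ S₀ : Set V) := by
    intro a ha
    have : Submodule.span ℤ S ≤ Submodule.span ℤ S₀ := by
      rw [Submodule.span_le]
      intro b hb
      rcases hcover hb with h | h
      · exact Submodule.subset_span h
      · rw [Set.mem_neg] at h
        have := Submodule.neg_mem (Submodule.span ℤ S₀) (Submodule.subset_span h)
        rwa [neg_neg] at this
    exact this ha
  ext γ
  constructor
  · rintro ⟨hγspan, hγΦ⟩
    obtain ⟨c, hcsupp, hcsum⟩ := Submodule.mem_span_set.1 (hspan hγspan)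
    have hγ : γ ∈ S₀ ∪ -S₀ :=
      main_ind hΦ (fun a ha => hSΦ (hS₀S ha)) hso₀ horth
        (c.sum fun _ n => n.natAbs) c γ hcsupp hcsum hγΦ le_rfl
    rcases hγ with h | h
    · exact Or.inl (hS₀S h)
    · rw [Set.mem_neg] at h
      right
      rw [Set.mem_neg]
      exact hS₀S h
  · rintro (h | h)
    · exact ⟨Submodule.subset_span h, hSΦ h⟩
    · rw [Set.mem_neg] at h
      constructor
      · have := Submodule.neg_mem (Submodule.span ℤ S) (Submodule.subset_span h)
        rwa [neg_neg] at this
      · have := hΦ.neg_mem (-γ) (hSΦ h)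
        rwa [neg_neg] at this
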